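/- An M weight-bounded linear weighted graph G with mixed (strict and non-strict) constraints is realizable if and only if there exists a time-stamping modulo M, tsm, that weakly satisfies G and such that there are no vertices u, v with (u,v) ∈ gtFr and (v,u) ∈ geqFr*, where geqFr* is the reflexive-transitive closure of geqFr. -/

import Mathlib

open Finset

/-- A weighted constraint edge: `ts tgt - ts src ◁ wt` where ◁ is `<` if `strict` else `≤`. -/
structure WEdge where
  src : ℕ
  strict : Bool
  wt : ℤ
  tgt : ℕ
deriving DecidableEq

/-- `ts` satisfies the constraint of edge `e`. -/
def satEdge (ts : ℕ → ℝ) (e : WEdge) : Prop :=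
  if e.strict then ts e.tgt - ts e.src < (e.wt : ℝ) else ts e.tgt - ts e.src ≤ (e.wt : ℝ)

/-- `ts` realizes the linear weighted graph on vertices `{1,…,n}` with edge set `E`:
monotone w.r.t. the linear order and all difference constraints hold. -/
def Realizes (n : ℕ) (E : Finset WEdge) (ts : ℕ → ℝ) : Prop :=
  (∀ u v : ℕ, 1 ≤ u → u ≤ v → v ≤ n → ts u ≤ ts v) ∧ ∀ e ∈ E, satEdge ts e

/-- Integer parts of consecutive time-stamps differ by at least 0 and at most `M - 1`. -/
def SlowlyMonotone (M : ℤ) (n : ℕ) (ts : ℕ → ℝ) : Prop :=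
  ∀ i : ℕ, 1 ≤ i → i < n → 0 ≤ ⌊ts (i + 1)⌋ - ⌊ts i⌋ ∧ ⌊ts (i + 1)⌋ - ⌊ts i⌋ ≤ M - 1

/-- All edges of the graph have endpoints in `{1,…,n}`. -/
def InGraph (n : ℕ) (E : Finset WEdge) : Prop :=
  ∀ e ∈ E, 1 ≤ e.src ∧ e.src ≤ n ∧ 1 ≤ e.tgt ∧ e.tgt ≤ n

/-- `M` weight-bounded: all weights have absolute value at most `M - 1`. -/
def WtBounded (M : ℤ) (E : Finset WEdge) : Prop := ∀ e ∈ E, |e.wt| ≤ M - 1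

/-- `dtsm(u,v) = (tsm v - tsm u) mod M`. -/
def dtsm (M : ℤ) (tsm : ℕ → ℤ) (u v : ℕ) : ℤ := (tsm v - tsm u) % M

/-- `dtsm⁺(u,v)`, for `u ≤ v`: the cumulative sum of consecutive `dtsm`'s, capped at `M`. -/
def dtsmP (M : ℤ) (tsm : ℕ → ℤ) (u v : ℕ) : ℤ :=
  min M (∑ i ∈ Finset.Ico u v, dtsm M tsm i (i + 1))

/-- Antisymmetric extension of `dtsm⁺` to arbitrary pairs. -/
def dtsmE (M : ℤ) (tsm : ℕ → ℤ) (u v : ℕ) : ℤ :=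
  if u ≤ v then dtsmP M tsm u v else - dtsmP M tsm v u

/-- `(u,v)` is `tsm`-big. -/
def TsmBig (M : ℤ) (tsm : ℕ → ℤ) (u v : ℕ) : Prop :=
  ∃ w1 w2 : ℕ, u ≤ w1 ∧ w1 < w2 ∧ w2 ≤ v ∧ M ≤ dtsm M tsm u w1 + dtsm M tsm w1 w2

/-- `tsm` is a time-stamping modulo `M` on vertices `{1,…,n}`. -/
def TSM (M : ℤ) (n : ℕ) (tsm : ℕ → ℤ) : Prop :=
  ∀ v, 1 ≤ v → v ≤ n → 0 ≤ tsm v ∧ tsm v < M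

/-- `tsm` weakly satisfies the graph (forward/backward conditions). -/
def WeaklySat (M : ℤ) (E : Finset WEdge) (tsm : ℕ → ℤ) : Prop :=
  ∀ e ∈ E,
    (e.src ≤ e.tgt → ¬ TsmBig M tsm e.src e.tgt ∧ dtsm M tsm e.src e.tgt ≤ e.wt) ∧
    (e.tgt < e.src → TsmBig M tsm e.tgt e.src ∨ - e.wt ≤ dtsm M tsm e.tgt e.src)

/-- `(u,v) ∈ geqFr`: fractional part of `ts u` must be ≥ that of `ts v`. -/
def geqFr (M : ℤ) (tsm : ℕ → ℤ) (E : Finset WEdge) (u v : ℕ) : Prop :=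
  (∃ e ∈ E, e.src = u ∧ e.tgt = v ∧ dtsmE M tsm u v = e.wt) ∨
  (v + 1 = u ∧ dtsmE M tsm u v = 0)

/-- `(u,v) ∈ gtFr`: fractional part of `ts u` must be > that of `ts v`. -/
def gtFr (M : ℤ) (tsm : ℕ → ℤ) (E : Finset WEdge) (u v : ℕ) : Prop :=
  ∃ e ∈ E, e.strict = true ∧ e.src = u ∧ e.tgt = v ∧ dtsmE M tsm u v = e.wt

open Classical in
/-- Number of `gtFr` edges used by the path `p 0, p 1, …, p k`. -/
noncomputable def gtCount (M : ℤ) (tsm : ℕ → ℤ) (E : Finset WEdge) (k : ℕ) (p : ℕ → ℕ) : ℕ :=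
  ((Finset.range k).filter (fun i => gtFr M tsm E (p i) (p (i + 1)))).card

section DtsmLemmas

variable {M : ℤ} {tsm : ℕ → ℤ}

lemma dtsm_nonneg (hM : 1 ≤ M) (a b : ℕ) : 0 ≤ dtsm M tsm a b :=
  Int.emod_nonneg _ (by omega)

lemma dtsm_lt (hM : 1 ≤ M) (a b : ℕ) : dtsm M tsm a b < M :=
  Int.emod_lt_of_pos _ (by omega)

lemma dtsm_self (a : ℕ) : dtsm M tsm a a = 0 := by
  simp [dtsm]

lemma dtsm_add (a b c : ℕ) :
    (dtsm M tsm a b + dtsm M tsm b c) % M = dtsm M tsm a c := by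
  unfold dtsm
  rw [← Int.add_emod]
  congr 1
  ring

lemma sum_dtsm_nonneg (hM : 1 ≤ M) (u v : ℕ) :
    0 ≤ ∑ i ∈ Finset.Ico u v, dtsm M tsm i (i + 1) :=
  Finset.sum_nonneg fun i _ => dtsm_nonneg hM i (i + 1)

lemma sum_dtsm_emod (hM : 1 ≤ M) (u v : ℕ) (h : u ≤ v) :
    (∑ i ∈ Finset.Ico u v, dtsm M tsm i (i + 1)) % M = dtsm M tsm u v := by
  induction v, h using Nat.le_induction with
  | base => simp [dtsm_self]
  | succ v hv ih =>
      rw [Finset.sum_Ico_succ_top hv, Int.add_emod, ih,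
        Int.emod_eq_of_lt (dtsm_nonneg hM _ _) (dtsm_lt hM _ _), dtsm_add]

lemma dtsm_le_sum (hM : 1 ≤ M) (u v : ℕ) (h : u ≤ v) :
    dtsm M tsm u v ≤ ∑ i ∈ Finset.Ico u v, dtsm M tsm i (i + 1) := by
  set S := ∑ i ∈ Finset.Ico u v, dtsm M tsm i (i + 1) with hS
  have h1 : S % M = dtsm M tsm u v := sum_dtsm_emod hM u v h
  have h2 : 0 ≤ S := sum_dtsm_nonneg hM u v
  have h3 : M * (S / M) + S % M = S := Int.mul_ediv_add_emod S M
  have h4 : 0 ≤ S / M := Int.ediv_nonneg h2 (by omega)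
  nlinarith [h4, h3, h1]

lemma sum_dtsm_eq_of_notBig (hM : 1 ≤ M) (u v : ℕ) (h : u ≤ v)
    (hnb : ¬ TsmBig M tsm u v) :
    ∑ i ∈ Finset.Ico u v, dtsm M tsm i (i + 1) = dtsm M tsm u v := by
  induction v, h using Nat.le_induction with
  | base => simp [dtsm_self]
  | succ v hv ih =>
      have hnb' : ¬ TsmBig M tsm u v := by
        intro ⟨w1, w2, h1, h2, h3, h4⟩
        exact hnb ⟨w1, w2, h1, h2, by omega, h4⟩
      have hlt : dtsm M tsm u v + dtsm M tsm v (v + 1) < M := by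
        by_contra hc
        exact hnb ⟨v, v + 1, hv, by omega, le_refl _, by omega⟩
      rw [Finset.sum_Ico_succ_top hv, ih hnb']
      have h0 : 0 ≤ dtsm M tsm u v + dtsm M tsm v (v + 1) :=
        add_nonneg (dtsm_nonneg hM _ _) (dtsm_nonneg hM _ _)
      calc dtsm M tsm u v + dtsm M tsm v (v + 1)
          = (dtsm M tsm u v + dtsm M tsm v (v + 1)) % M := (Int.emod_eq_of_lt h0 hlt).symm
        _ = dtsm M tsm u (v + 1) := dtsm_add u v (v + 1)

lemma big_sum_ge (hM : 1 ≤ M) (u v : ℕ) (hb : TsmBig M tsm u v) :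
    M ≤ ∑ i ∈ Finset.Ico u v, dtsm M tsm i (i + 1) := by
  obtain ⟨w1, w2, h1, h2, h3, h4⟩ := hb
  have e1 : ∑ i ∈ Finset.Ico u w1, dtsm M tsm i (i + 1)
      + ∑ i ∈ Finset.Ico w1 v, dtsm M tsm i (i + 1)
      = ∑ i ∈ Finset.Ico u v, dtsm M tsm i (i + 1) :=
    Finset.sum_Ico_consecutive _ (by omega) (by omega)
  have e2 : ∑ i ∈ Finset.Ico w1 w2, dtsm M tsm i (i + 1)
      + ∑ i ∈ Finset.Ico w2 v, dtsm M tsm i (i + 1)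
      = ∑ i ∈ Finset.Ico w1 v, dtsm M tsm i (i + 1) :=
    Finset.sum_Ico_consecutive _ (by omega) h3
  have b1 := dtsm_le_sum (tsm := tsm) hM u w1 (by omega)
  have b2 := dtsm_le_sum (tsm := tsm) hM w1 w2 (by omega)
  have b3 := sum_dtsm_nonneg (tsm := tsm) hM w2 v
  omega

end DtsmLemmas
lemma satEdge_le (f : ℕ → ℝ) (e : WEdge) (h : satEdge f e) :
    f e.tgt - f e.src ≤ (e.wt : ℝ) := by
  unfold satEdge at h; split_ifs at h; exacts [le_of_lt h, h]

lemma satEdge_lt (f : ℕ → ℝ) (e : WEdge) (hs : e.strict = true) (h : satEdge f e) :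
    f e.tgt - f e.src < (e.wt : ℝ) := by
  unfold satEdge at h; rwa [if_pos hs] at h

lemma satEdge_of (f : ℕ → ℝ) (e : WEdge) (hle : f e.tgt - f e.src ≤ (e.wt : ℝ))
    (hlt : e.strict = true → f e.tgt - f e.src < (e.wt : ℝ)) : satEdge f e := by
  unfold satEdge; split_ifs with h; exacts [hlt h, hle]
noncomputable def crop (M : ℤ) (ts : ℕ → ℝ) : ℕ → ℝ
  | 0 => ts 1
  | 1 => ts 1
  | (j+2) =>
      if ⌊crop M ts (j+1) + (ts (j+2) - ts (j+1))⌋ - ⌊crop M ts (j+1)⌋ ≤ M - 1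
      then crop M ts (j+1) + (ts (j+2) - ts (j+1))
      else crop M ts (j+1) + ((M : ℝ) - 1) + ((⌊crop M ts (j+1)⌋ : ℝ) + 1 - crop M ts (j+1)) / 2

lemma crop_step (M : ℤ) (hM : 1 ≤ M) (ts : ℕ → ℝ) (i : ℕ) (hi : 1 ≤ i)
    (hmono : ts i ≤ ts (i + 1)) :
    crop M ts i ≤ crop M ts (i + 1) ∧
    ⌊crop M ts (i + 1)⌋ - ⌊crop M ts i⌋ ≤ M - 1 ∧
    crop M ts (i + 1) - crop M ts i ≤ ts (i + 1) - ts i ∧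
    (crop M ts (i + 1) - crop M ts i = ts (i + 1) - ts i ∨
      (M : ℝ) - 1 < crop M ts (i + 1) - crop M ts i) := by
  obtain ⟨j, rfl⟩ : ∃ j, i = j + 1 := ⟨i - 1, by omega⟩
  simp only [show j + 1 + 1 = j + 2 from rfl]
  set p := crop M ts (j + 1) with hp
  have hMr : (1 : ℝ) ≤ (M : ℝ) := by exact_mod_cast hM
  have hfl : (⌊p⌋ : ℝ) ≤ p := Int.floor_le p
  have hfu : p < (⌊p⌋ : ℝ) + 1 := Int.lt_floor_add_one p
  by_cases h : ⌊p + (ts (j + 2) - ts (j + 1))⌋ - ⌊p⌋ ≤ M - 1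
  · have hc : crop M ts (j + 2) = p + (ts (j + 2) - ts (j + 1)) := by
      rw [show j + 2 = (j + 1) + 1 from rfl]
      rw [crop]; simp only [← hp, if_pos h]
    refine ⟨by rw [hc]; linarith, by rw [hc]; exact h, by rw [hc]; ring_nf; rfl, ?_⟩
    left; rw [hc]; ring
  · have hc : crop M ts (j + 2) = p + ((M : ℝ) - 1) + ((⌊p⌋ : ℝ) + 1 - p) / 2 := by
      rw [show j + 2 = (j + 1) + 1 from rfl]
      rw [crop]; simp only [← hp, if_neg h]
    push_neg at h
    have hMle : (⌊p⌋ : ℤ) + M ≤ ⌊p + (ts (j + 2) - ts (j + 1))⌋ := by omega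
    have hcge : ((⌊p⌋ : ℝ) + M) ≤ p + (ts (j + 2) - ts (j + 1)) := by
      have h1 : ((⌊p⌋ + M : ℤ) : ℝ) ≤ (⌊p + (ts (j + 2) - ts (j + 1))⌋ : ℝ) := by
        exact_mod_cast hMle
      have h2 := Int.floor_le (p + (ts (j + 2) - ts (j + 1)))
      push_cast at h1
      linarith
    have hstep : crop M ts (j + 2) - p = ((M : ℝ) - 1) + ((⌊p⌋ : ℝ) + 1 - p) / 2 := by
      rw [hc]; ring
    have hfloor : ⌊crop M ts (j + 2)⌋ ≤ ⌊p⌋ + (M - 1) := by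
      have hub : crop M ts (j + 2) < ((⌊p⌋ + M : ℤ) : ℝ) := by
        rw [hc]; push_cast; linarith
      have := Int.floor_lt.mpr hub
      omega
    refine ⟨by linarith [hstep], by omega, by linarith [hstep, hcge], Or.inr (by linarith [hstep])⟩
lemma crop_cum (M : ℤ) (hM : 1 ≤ M) (ts : ℕ → ℝ) (n : ℕ)
    (hmono : ∀ u v : ℕ, 1 ≤ u → u ≤ v → v ≤ n → ts u ≤ ts v)
    (u v : ℕ) (hu : 1 ≤ u) (huv : u ≤ v) (hv : v ≤ n) :
    crop M ts u ≤ crop M ts v ∧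
    crop M ts v - crop M ts u ≤ ts v - ts u ∧
    (crop M ts v - crop M ts u = ts v - ts u ∨ (M : ℝ) - 1 < crop M ts v - crop M ts u) := by
  induction v, huv using Nat.le_induction with
  | base => exact ⟨le_refl _, by simp, Or.inl (by ring)⟩
  | succ v hv' ih =>
      have hvn : v ≤ n := by omega
      obtain ⟨ih1, ih2, ih3⟩ := ih hvn
      have hv1 : 1 ≤ v := le_trans hu hv'
      have hst := crop_step M hM ts v hv1 (hmono v (v + 1) hv1 (by omega) hv)
      obtain ⟨s1, s2, s3, s4⟩ := hst
      refine ⟨le_trans ih1 s1, by linarith, ?_⟩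
      rcases ih3 with h | h
      · rcases s4 with h' | h'
        · exact Or.inl (by linarith)
        · exact Or.inr (by linarith)
      · exact Or.inr (by linarith)

lemma crop_slow (M : ℤ) (hM : 1 ≤ M) (ts : ℕ → ℝ) (n : ℕ)
    (hmono : ∀ u v : ℕ, 1 ≤ u → u ≤ v → v ≤ n → ts u ≤ ts v)
    (i : ℕ) (hi : 1 ≤ i) (hin : i < n) :
    0 ≤ ⌊crop M ts (i + 1)⌋ - ⌊crop M ts i⌋ ∧ ⌊crop M ts (i + 1)⌋ - ⌊crop M ts i⌋ ≤ M - 1 := by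
  have hst := crop_step M hM ts i hi (hmono i (i + 1) hi (by omega) (by omega))
  exact ⟨by have := Int.floor_le_floor hst.1; omega, hst.2.1⟩
lemma forward_dir (M : ℤ) (hM : 1 ≤ M) (n : ℕ) (E : Finset WEdge)
    (hG : InGraph n E) (hW : WtBounded M E) (ts : ℕ → ℝ) (hts : Realizes n E ts) :
    ∃ tsm : ℕ → ℤ, TSM M n tsm ∧ WeaklySat M E tsm ∧
      ¬ ∃ u v : ℕ, gtFr M tsm E u v ∧ Relation.ReflTransGen (geqFr M tsm E) v u := by
  classical
  obtain ⟨hm, he⟩ := hts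
  set c : ℕ → ℝ := crop M ts with hc
  have hMr : (1 : ℝ) ≤ (M : ℝ) := by exact_mod_cast hM
  -- monotonicity of c
  have hcmono : ∀ u v : ℕ, 1 ≤ u → u ≤ v → v ≤ n → c u ≤ c v := fun u v hu huv hv =>
    (crop_cum M hM ts n hm u v hu huv hv).1
  -- satisfaction of edges by c
  have hce : ∀ e ∈ E, satEdge c e := by
    intro e heE
    obtain ⟨hs1, hs2, ht1, ht2⟩ := hG e heE
    have hwb1 : -(M - 1) ≤ e.wt ∧ e.wt ≤ M - 1 := abs_le.mp (hW e heE)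
    have hwtr : ((1 : ℝ) - M) ≤ (e.wt : ℝ) := by
      have : (1 : ℤ) - M ≤ e.wt := by omega
      exact_mod_cast this
    have hle := satEdge_le ts e (he e heE)
    by_cases hdir : e.src ≤ e.tgt
    · have hcum := crop_cum M hM ts n hm e.src e.tgt hs1 hdir ht2
      exact satEdge_of c e (by linarith [hcum.2.1])
        (fun hs => by have := satEdge_lt ts e hs (he e heE); linarith [hcum.2.1])
    · push_neg at hdir
      have hcum := crop_cum M hM ts n hm e.tgt e.src ht1 (le_of_lt hdir) hs2
      rcases hcum.2.2 with heq | hbig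
      · exact satEdge_of c e (by linarith)
          (fun hs => by have := satEdge_lt ts e hs (he e heE); linarith)
      · exact satEdge_of c e (by linarith) (fun hs => by linarith)
  set F : ℕ → ℤ := fun v => ⌊c v⌋ with hFdef
  set tsm : ℕ → ℤ := fun v => F v % M with htsmdef
  -- basic facts
  have hF : ∀ i : ℕ, 1 ≤ i → i < n → 0 ≤ F (i + 1) - F i ∧ F (i + 1) - F i ≤ M - 1 :=
    fun i hi hin => crop_slow M hM ts n hm i hi hin
  have hFmono : ∀ u v : ℕ, 1 ≤ u → u ≤ v → v ≤ n → F u ≤ F v :=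
    fun u v hu huv hv => Int.floor_le_floor (hcmono u v hu huv hv)
  have hdtsmgen : ∀ u v : ℕ, dtsm M tsm u v = (F v - F u) % M := by
    intro u v
    show (F v % M - F u % M) % M = (F v - F u) % M
    rw [← Int.sub_emod]
  have hdtsm_small : ∀ u v : ℕ, 0 ≤ F v - F u → F v - F u ≤ M - 1 →
      dtsm M tsm u v = F v - F u := by
    intro u v h0 h1
    rw [hdtsmgen]
    exact Int.emod_eq_of_lt h0 (by omega)
  have hdtsm1 : ∀ i : ℕ, 1 ≤ i → i < n → dtsm M tsm i (i + 1) = F (i + 1) - F i := by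
    intro i hi hin
    exact hdtsm_small i (i + 1) (hF i hi hin).1 (hF i hi hin).2
  have hsum : ∀ u v : ℕ, 1 ≤ u → u ≤ v → v ≤ n →
      ∑ i ∈ Finset.Ico u v, dtsm M tsm i (i + 1) = F v - F u := by
    intro u v hu huv
    induction v, huv using Nat.le_induction with
    | base => intro _; simp
    | succ v hv ih =>
        intro hvn
        rw [Finset.sum_Ico_succ_top hv, ih (by omega),
          hdtsm1 v (le_trans hu hv) (by omega)]
        ring
  -- floor transfers
  have hfloorle : ∀ (a b : ℕ) (w : ℤ), c b - c a ≤ (w : ℝ) → F b - F a ≤ w := by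
    intro a b w h
    have h1 : c b ≤ c a + (w : ℝ) := by linarith
    have h2 : F b ≤ ⌊c a + (w : ℝ)⌋ := Int.floor_le_floor h1
    rw [Int.floor_add_intCast] at h2
    simp only [hFdef]
    simp only [hFdef] at h2
    omega
  have hfloorge : ∀ (a b : ℕ) (w : ℤ), (w : ℝ) ≤ c b - c a → w ≤ F b - F a := by
    intro a b w h
    have h1 : c a + (w : ℝ) ≤ c b := by linarith
    have h2 : ⌊c a + (w : ℝ)⌋ ≤ F b := Int.floor_le_floor h1
    rw [Int.floor_add_intCast] at h2
    simp only [hFdef]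
    simp only [hFdef] at h2
    omega
  have habs : ∀ e ∈ E, c e.tgt - c e.src ≤ (e.wt : ℝ) := fun e heE => satEdge_le c e (hce e heE)
  refine ⟨tsm, ?_, ?_, ?_⟩
  · intro v _ _
    exact ⟨Int.emod_nonneg _ (by omega), Int.emod_lt_of_pos _ (by omega)⟩
  · -- WeaklySat
    intro e heE
    obtain ⟨hs1, hs2, ht1, ht2⟩ := hG e heE
    have hwb1 : -(M - 1) ≤ e.wt ∧ e.wt ≤ M - 1 := abs_le.mp (hW e heE)
    constructor
    · intro hdir
      have hDw : F e.tgt - F e.src ≤ e.wt := hfloorle _ _ _ (habs e heE)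
      have hD0 : 0 ≤ F e.tgt - F e.src := by
        have := hFmono e.src e.tgt hs1 hdir ht2; omega
      constructor
      · rintro ⟨w1, w2, h1, h2, h3, h4⟩
        have hb1 : F e.src ≤ F w1 := hFmono _ _ hs1 h1 (by omega)
        have hb2 : F w1 ≤ F w2 := hFmono _ _ (by omega) (by omega) (by omega)
        have hb3 : F w2 ≤ F e.tgt := hFmono _ _ (by omega) h3 ht2
        rw [hdtsm_small e.src w1 (by omega) (by omega),
          hdtsm_small w1 w2 (by omega) (by omega)] at h4
        omega
      · rw [hdtsm_small e.src e.tgt hD0 (by omega)]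
        exact hDw
    · intro hdir
      have hDw : -e.wt ≤ F e.src - F e.tgt := by
        refine hfloorge e.tgt e.src (-e.wt) ?_
        have := habs e heE
        push_cast
        linarith
      have hD0 : 0 ≤ F e.src - F e.tgt := by
        have := hFmono e.tgt e.src ht1 (le_of_lt hdir) hs2; omega
      by_cases hDM : F e.src - F e.tgt ≤ M - 1
      · right
        rw [hdtsm_small e.tgt e.src hD0 hDM]
        exact hDw
      · left
        push_neg at hDM
        have haux : ∀ w : ℕ, e.tgt ≤ w → w ≤ n → M ≤ F w - F e.tgt → TsmBig M tsm e.tgt w := by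
          intro w hw
          induction w, hw using Nat.le_induction with
          | base => intro _ h; omega
          | succ w hw ih =>
              intro hwn hMw
              by_cases hcase : M ≤ F w - F e.tgt
              · obtain ⟨w1, w2, g1, g2, g3, g4⟩ := ih (by omega) hcase
                exact ⟨w1, w2, g1, g2, by omega, g4⟩
              · push_neg at hcase
                have hw0 : 0 ≤ F w - F e.tgt := by
                  have := hFmono e.tgt w ht1 hw (by omega); omega
                refine ⟨w, w + 1, hw, by omega, le_refl _, ?_⟩
                rw [hdtsm_small e.tgt w hw0 (by omega),
                  hdtsm1 w (le_trans ht1 hw) (by omega)]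
                omega
        exact haux e.src (le_of_lt hdir) hs2 (by omega)
  · -- no gtFr / geqFr* cycle
    rintro ⟨u0, v0, hgt, hchain⟩
    -- key edge computation
    have hedgeF : ∀ e ∈ E, dtsmE M tsm e.src e.tgt = e.wt → F e.tgt - F e.src = e.wt := by
      intro e heE hdE
      obtain ⟨hs1, hs2, ht1, ht2⟩ := hG e heE
      have hwb1 : -(M - 1) ≤ e.wt ∧ e.wt ≤ M - 1 := abs_le.mp (hW e heE)
      unfold dtsmE at hdE
      by_cases hdir : e.src ≤ e.tgt
      · rw [if_pos hdir] at hdE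
        unfold dtsmP at hdE
        rw [hsum e.src e.tgt hs1 hdir ht2] at hdE
        have hDw : F e.tgt - F e.src ≤ e.wt := hfloorle _ _ _ (habs e heE)
        rcases min_cases M (F e.tgt - F e.src) with ⟨h1, h2⟩ | ⟨h1, h2⟩ <;>
          rw [h1] at hdE <;> omega
      · rw [if_neg hdir] at hdE
        push_neg at hdir
        unfold dtsmP at hdE
        rw [hsum e.tgt e.src ht1 (le_of_lt hdir) hs2] at hdE
        rcases min_cases M (F e.src - F e.tgt) with ⟨h1, h2⟩ | ⟨h1, h2⟩ <;>
          rw [h1] at hdE <;> omega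
    -- one geqFr step
    have hstep : ∀ a b : ℕ, 1 ≤ a → a ≤ n → geqFr M tsm E a b →
        (1 ≤ b ∧ b ≤ n ∧ c b - (F b : ℝ) ≤ c a - (F a : ℝ)) ∨ b = 0 := by
      intro a b ha1 ha2 hab
      rcases hab with ⟨e, heE, hsrc, htgt, hdE⟩ | ⟨hpred, hdE⟩
      · left
        obtain ⟨hs1, hs2, ht1, ht2⟩ := hG e heE
        subst hsrc htgt
        have hFd : F e.tgt - F e.src = e.wt := hedgeF e heE hdE
        refine ⟨ht1, ht2, ?_⟩
        have hs := habs e heE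
        have hcast : ((F e.tgt - F e.src : ℤ) : ℝ) = (e.wt : ℝ) := by exact_mod_cast hFd
        push_cast at hcast
        linarith
      · rcases Nat.eq_zero_or_pos b with hb0 | hb1
        · right; exact hb0
        · left
          have hba : b < a := by omega
          refine ⟨hb1, by omega, ?_⟩
          unfold dtsmE at hdE
          rw [if_neg (by omega)] at hdE
          unfold dtsmP at hdE
          rw [hsum b a hb1 (le_of_lt hba) ha2] at hdE
          have hF0 : 0 ≤ F a - F b := by
            have := hFmono b a hb1 (le_of_lt hba) ha2; omega
          have hFab : F a = F b := by
            rcases min_cases M (F a - F b) with ⟨h1, h2⟩ | ⟨h1, h2⟩ <;>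
              rw [h1] at hdE <;> omega
          have hcab : c b ≤ c a := hcmono b a hb1 (le_of_lt hba) ha2
          rw [hFab]
          linarith
    -- chains can't leave 0
    have hzero : ∀ w : ℕ, Relation.ReflTransGen (geqFr M tsm E) 0 w → w = 0 := by
      intro w hw
      rcases Relation.ReflTransGen.cases_head hw with h | ⟨d, hd, _⟩
      · exact h.symm
      · rcases hd with ⟨e, heE, hsrc, _, _⟩ | ⟨hpred, _⟩
        · have := (hG e heE).1; omega
        · omega
    -- strict step
    obtain ⟨e0, he0E, he0s, he0src, he0tgt, he0d⟩ := hgt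
    subst he0src he0tgt
    obtain ⟨hs1, hs2, ht1, ht2⟩ := hG e0 he0E
    have hstrict : c e0.tgt - (F e0.tgt : ℝ) < c e0.src - (F e0.src : ℝ) := by
      have hFd : F e0.tgt - F e0.src = e0.wt := hedgeF e0 he0E he0d
      have hs := satEdge_lt c e0 he0s (hce e0 he0E)
      have hcast : ((F e0.tgt - F e0.src : ℤ) : ℝ) = (e0.wt : ℝ) := by exact_mod_cast hFd
      push_cast at hcast
      linarith
    -- chain gives the reverse inequality
    have hchainle : ∀ a : ℕ, Relation.ReflTransGen (geqFr M tsm E) a e0.src →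
        1 ≤ a → a ≤ n → c e0.src - (F e0.src : ℝ) ≤ c a - (F a : ℝ) := by
      intro a hch
      induction hch using Relation.ReflTransGen.head_induction_on with
      | refl => intro _ _; exact le_refl _
      | head hab hbc ih =>
          rename_i x y
          intro hx1 hx2
          rcases hstep x y hx1 hx2 hab with ⟨hy1, hy2, hle⟩ | hy0
          · exact le_trans (ih hy1 hy2) hle
          · subst hy0
            have := hzero e0.src hbc
            omega
    have := hchainle e0.tgt hchain ht1 ht2
    linarith
lemma backward_dir (M : ℤ) (hM : 1 ≤ M) (n : ℕ) (E : Finset WEdge)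
    (hG : InGraph n E) (hW : WtBounded M E) (tsm : ℕ → ℤ)
    (hWS : WeaklySat M E tsm)
    (hNC : ¬ ∃ u v : ℕ, gtFr M tsm E u v ∧ Relation.ReflTransGen (geqFr M tsm E) v u) :
    ∃ ts : ℕ → ℝ, Realizes n E ts := by
  classical
  set I : ℕ → ℤ := fun v => ∑ i ∈ Finset.Ico 1 v, dtsm M tsm i (i + 1) with hIdef
  set S : ℕ → Finset ℕ :=
    fun v => (Finset.Icc 1 n).filter (fun w => Relation.ReflTransGen (geqFr M tsm E) v w)
    with hSdef
  set f : ℕ → ℝ := fun v => ((S v).card : ℝ) / (n + 1) with hfdef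
  set ts : ℕ → ℝ := fun v => ((I v : ℤ) : ℝ) + f v with htsdef
  have hn1 : (0 : ℝ) < (n : ℝ) + 1 := by positivity
  have hf0 : ∀ v, 0 ≤ f v := fun v => by simp only [hfdef]; positivity
  have hf1 : ∀ v, f v < 1 := by
    intro v
    have hcard : (S v).card ≤ n := by
      have h1 := Finset.card_le_card
        (Finset.filter_subset (fun w => Relation.ReflTransGen (geqFr M tsm E) v w)
          (Finset.Icc 1 n))
      simpa [hSdef] using h1
    simp only [hfdef]
    rw [div_lt_one hn1]
    exact_mod_cast Nat.lt_succ_of_le hcard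
  have hfR : ∀ a b : ℕ, Relation.ReflTransGen (geqFr M tsm E) a b → f b ≤ f a := by
    intro a b hab
    have hsub : S b ⊆ S a := by
      intro w hw
      rw [hSdef, Finset.mem_filter] at hw ⊢
      exact ⟨hw.1, hab.trans hw.2⟩
    simp only [hfdef]
    rw [div_le_div_iff_of_pos_right hn1]
    exact_mod_cast Finset.card_le_card hsub
  have hfS : ∀ a b : ℕ, 1 ≤ a → a ≤ n → gtFr M tsm E a b → f b + 1 / (n + 1) ≤ f a := by
    intro a b ha1 ha2 hgt
    have hgeq : geqFr M tsm E a b := by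
      obtain ⟨e, heE, _, h1, h2, h3⟩ := hgt
      exact Or.inl ⟨e, heE, h1, h2, h3⟩
    have hsub : S b ⊆ S a := by
      intro w hw
      rw [hSdef, Finset.mem_filter] at hw ⊢
      exact ⟨hw.1, (Relation.ReflTransGen.single hgeq).trans hw.2⟩
    have hain : a ∈ S a := by
      rw [hSdef, Finset.mem_filter]
      exact ⟨Finset.mem_Icc.mpr ⟨ha1, ha2⟩, Relation.ReflTransGen.refl⟩
    have hanot : a ∉ S b := by
      intro h
      rw [hSdef, Finset.mem_filter] at h
      exact hNC ⟨a, b, hgt, h.2⟩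
    have hcard : (S b).card + 1 ≤ (S a).card :=
      Finset.card_lt_card ((Finset.ssubset_iff_of_subset hsub).mpr ⟨a, hain, hanot⟩)
    simp only [hfdef]
    rw [← add_div, div_le_div_iff_of_pos_right hn1]
    exact_mod_cast hcard
  have hIsum : ∀ u v : ℕ, 1 ≤ u → u ≤ v →
      I v - I u = ∑ i ∈ Finset.Ico u v, dtsm M tsm i (i + 1) := by
    intro u v hu huv
    have h2 : I u + ∑ i ∈ Finset.Ico u v, dtsm M tsm i (i + 1) = I v :=
      Finset.sum_Ico_consecutive _ hu huv
    omega
  -- single-step monotonicity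
  have hstep : ∀ i : ℕ, 1 ≤ i → ts i ≤ ts (i + 1) := by
    intro i hi
    have hIstep : I (i + 1) - I i = dtsm M tsm i (i + 1) := by
      have h1 := hIsum i (i + 1) hi (by omega)
      rw [Finset.sum_Ico_succ_top (le_refl i)] at h1
      simp at h1
      omega
    rcases eq_or_lt_of_le (dtsm_nonneg (tsm := tsm) hM i (i + 1)) with h0 | h1
    · -- zero step: use geqFr (i+1) i
      have hgeq : geqFr M tsm E (i + 1) i := by
        refine Or.inr ⟨rfl, ?_⟩
        unfold dtsmE
        rw [if_neg (by omega)]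
        unfold dtsmP
        rw [Finset.sum_Ico_succ_top (le_refl i)]
        simp [← h0, min_eq_right (by omega : (0:ℤ) ≤ M)]
      have hfle : f i ≤ f (i + 1) := hfR _ _ (Relation.ReflTransGen.single hgeq)
      have : ((I (i+1) : ℤ) : ℝ) = ((I i : ℤ) : ℝ) := by
        have : I (i + 1) = I i := by omega
        exact_mod_cast this
      simp only [htsdef]
      linarith
    · have hIr : ((I i : ℤ) : ℝ) + 1 ≤ ((I (i+1) : ℤ) : ℝ) := by
        have : I i + 1 ≤ I (i + 1) := by omega
        exact_mod_cast this
      simp only [htsdef]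
      linarith [hf0 i, hf1 i, hf0 (i+1), hf1 (i+1)]
  have hmono : ∀ u v : ℕ, 1 ≤ u → u ≤ v → ts u ≤ ts v := by
    intro u v hu huv
    induction v, huv using Nat.le_induction with
    | base => exact le_refl _
    | succ v hv ih => exact le_trans ih (hstep v (le_trans hu hv))
  refine ⟨ts, fun u v hu huv _ => hmono u v hu huv, ?_⟩
  intro e heE
  obtain ⟨hs1, hs2, ht1, ht2⟩ := hG e heE
  have hwb1 : -(M - 1) ≤ e.wt ∧ e.wt ≤ M - 1 := abs_le.mp (hW e heE)
  obtain ⟨hfwd, hbwd⟩ := hWS e heE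
  by_cases hdir : e.src ≤ e.tgt
  · obtain ⟨hnb, hdle⟩ := hfwd hdir
    have hSig : ∑ i ∈ Finset.Ico e.src e.tgt, dtsm M tsm i (i + 1) = dtsm M tsm e.src e.tgt :=
      sum_dtsm_eq_of_notBig hM _ _ hdir hnb
    have hIr : ((I e.tgt : ℤ) : ℝ) - ((I e.src : ℤ) : ℝ)
        = ((dtsm M tsm e.src e.tgt : ℤ) : ℝ) := by
      have := hIsum e.src e.tgt hs1 hdir
      rw [hSig] at this
      exact_mod_cast this
    rcases eq_or_lt_of_le hdle with heq | hlt
    · -- dtsm = wt : use geqFr/gtFr src tgt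
      have hdE : dtsmE M tsm e.src e.tgt = e.wt := by
        unfold dtsmE
        rw [if_pos hdir]
        unfold dtsmP
        rw [hSig, min_eq_right (le_of_lt (dtsm_lt (tsm := tsm) hM e.src e.tgt))]
        exact heq
      have hgeq : geqFr M tsm E e.src e.tgt := Or.inl ⟨e, heE, rfl, rfl, hdE⟩
      have hfle : f e.tgt ≤ f e.src := hfR _ _ (Relation.ReflTransGen.single hgeq)
      have hwr : ((dtsm M tsm e.src e.tgt : ℤ) : ℝ) = (e.wt : ℝ) := by exact_mod_cast heq
      refine satEdge_of ts e ?_ ?_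
      · simp only [htsdef]; linarith
      · intro hstrict
        have hgt : gtFr M tsm E e.src e.tgt := ⟨e, heE, hstrict, rfl, rfl, hdE⟩
        have := hfS e.src e.tgt hs1 hs2 hgt
        have h1n : (0:ℝ) < 1 / (n + 1) := by positivity
        simp only [htsdef]; linarith
    · -- dtsm < wt : slack
      have hwr : ((dtsm M tsm e.src e.tgt : ℤ) : ℝ) + 1 ≤ (e.wt : ℝ) := by
        exact_mod_cast hlt
      refine satEdge_of ts e ?_ (fun _ => ?_) <;>
        · simp only [htsdef]
          linarith [hf0 e.src, hf1 e.tgt]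
  · push_neg at hdir
    have hb := hbwd hdir
    have hSg0 : 0 ≤ ∑ i ∈ Finset.Ico e.tgt e.src, dtsm M tsm i (i + 1) :=
      sum_dtsm_nonneg hM _ _
    have hIr : ((I e.src : ℤ) : ℝ) - ((I e.tgt : ℤ) : ℝ)
        = ((∑ i ∈ Finset.Ico e.tgt e.src, dtsm M tsm i (i + 1) : ℤ) : ℝ) := by
      exact_mod_cast hIsum e.tgt e.src ht1 (le_of_lt hdir)
    rcases hb with hbig | hd
    · have hSgM : M ≤ ∑ i ∈ Finset.Ico e.tgt e.src, dtsm M tsm i (i + 1) :=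
        big_sum_ge hM _ _ hbig
      have hMr : (1 : ℝ) ≤ (M : ℝ) := by exact_mod_cast hM
      have hwge : (1 : ℝ) - (M : ℝ) ≤ (e.wt : ℝ) := by
        have : (1 : ℤ) - M ≤ e.wt := by omega
        exact_mod_cast this
      have hSgr : ((M : ℤ) : ℝ) ≤ ((∑ i ∈ Finset.Ico e.tgt e.src,
          dtsm M tsm i (i + 1) : ℤ) : ℝ) := by exact_mod_cast hSgM
      refine satEdge_of ts e ?_ (fun _ => ?_) <;>
        · simp only [htsdef]
          linarith [hf0 e.tgt, hf1 e.tgt, hf0 e.src, hf1 e.src]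
    · have hdleS : dtsm M tsm e.tgt e.src ≤ ∑ i ∈ Finset.Ico e.tgt e.src, dtsm M tsm i (i + 1) :=
        dtsm_le_sum hM _ _ (le_of_lt hdir)
      by_cases hEq : ∑ i ∈ Finset.Ico e.tgt e.src, dtsm M tsm i (i + 1) = -e.wt
      · have hdE : dtsmE M tsm e.src e.tgt = e.wt := by
          unfold dtsmE
          rw [if_neg (by omega)]
          unfold dtsmP
          rw [min_eq_right (by omega : (∑ i ∈ Finset.Ico e.tgt e.src,
            dtsm M tsm i (i + 1)) ≤ M), hEq]
          ring
        have hgeq : geqFr M tsm E e.src e.tgt := Or.inl ⟨e, heE, rfl, rfl, hdE⟩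
        have hfle : f e.tgt ≤ f e.src := hfR _ _ (Relation.ReflTransGen.single hgeq)
        have hSgr : ((∑ i ∈ Finset.Ico e.tgt e.src, dtsm M tsm i (i + 1) : ℤ) : ℝ)
            = -(e.wt : ℝ) := by exact_mod_cast hEq
        refine satEdge_of ts e ?_ ?_
        · simp only [htsdef]; linarith
        · intro hstrict
          have hgt : gtFr M tsm E e.src e.tgt := ⟨e, heE, hstrict, rfl, rfl, hdE⟩
          have := hfS e.src e.tgt hs1 hs2 hgt
          have h1n : (0:ℝ) < 1 / (n + 1) := by positivity
          simp only [htsdef]; linarith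
      · have hSgw : -e.wt + 1 ≤ ∑ i ∈ Finset.Ico e.tgt e.src, dtsm M tsm i (i + 1) := by omega
        have hSgr : -(e.wt : ℝ) + 1 ≤ ((∑ i ∈ Finset.Ico e.tgt e.src,
            dtsm M tsm i (i + 1) : ℤ) : ℝ) := by exact_mod_cast hSgw
        refine satEdge_of ts e ?_ (fun _ => ?_) <;>
          · simp only [htsdef]
            linarith [hf0 e.tgt, hf1 e.tgt, hf0 e.src, hf1 e.src]
theorem mixed_realizable_iff (M : ℤ) (hM : 1 ≤ M) (n : ℕ) (E : Finset WEdge)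
    (hG : InGraph n E) (hW : WtBounded M E) :
    (∃ ts : ℕ → ℝ, Realizes n E ts) ↔
      ∃ tsm : ℕ → ℤ, TSM M n tsm ∧ WeaklySat M E tsm ∧
        ¬ ∃ u v : ℕ, gtFr M tsm E u v ∧ Relation.ReflTransGen (geqFr M tsm E) v u := by
  constructor
  · rintro ⟨ts, hts⟩
    exact forward_dir M hM n E hG hW ts hts
  · rintro ⟨tsm, _, hWS, hNC⟩
    exact backward_dir M hM n E hG hW tsm hWS hNC
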